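/- arXiv:1711.00064 — 3 statements merged into one kernel-verified Lean document; each statement's English description precedes it below -/
import Mathlib

section
/- Let μ be a probability measure, p1, p0 nonnegative measurable functions, c₀ > 0, R(c₀) = {x : p1(x) ≥ c₀ p0(x)}, and suppose ∫_{R(c₀)} p0 dμ = α₀. Then for any measurable set S, ∫_{R(c₀)} p1 dμ − ∫_S p1 dμ ≥ c₀ · (α₀ − ∫_S p0 dμ). -/
open MeasureTheory

/-- Key inequality in the proof of Lemma 1: the `p1`-mass gap between the
threshold region `R(c₀)` and any region `S` is at least `c₀` times the
corresponding gap in `p0`-mass. -/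
theorem stmt_3 {X : Type*} [MeasurableSpace X] (μ : Measure X) [IsProbabilityMeasure μ]
    (p1 p0 : X → ℝ) (hp1m : Measurable p1) (hp0m : Measurable p0)
    (hp1 : ∀ x, 0 ≤ p1 x) (hp0 : ∀ x, 0 ≤ p0 x)
    (hp1i : Integrable p1 μ) (hp0i : Integrable p0 μ)
    (c₀ : ℝ) (hc₀ : 0 < c₀) (α₀ : ℝ)
    (hR : ∫ x in {x | c₀ * p0 x ≤ p1 x}, p0 x ∂μ = α₀)
    (S : Set X) (hS : MeasurableSet S) :
    c₀ * (α₀ - ∫ x in S, p0 x ∂μ) ≤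
      (∫ x in {x | c₀ * p0 x ≤ p1 x}, p1 x ∂μ) - ∫ x in S, p1 x ∂μ := by
  set R : Set X := {x | c₀ * p0 x ≤ p1 x} with hRdef
  have hRm : MeasurableSet R := measurableSet_le (by fun_prop) hp1m
  have h1R : IntegrableOn p1 R μ := hp1i.integrableOn
  have h1S : IntegrableOn p1 S μ := hp1i.integrableOn
  have h0R : IntegrableOn p0 R μ := hp0i.integrableOn
  have h0S : IntegrableOn p0 S μ := hp0i.integrableOn
  have hsplit : ∀ (f : X → ℝ), Integrable f μ →
      (∫ x in R, f x ∂μ) - ∫ x in S, f x ∂μ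
        = (∫ x in R \ S, f x ∂μ) - ∫ x in S \ R, f x ∂μ := by
    intro f hf
    have h1 : (∫ x in R ∩ S, f x ∂μ) + ∫ x in R \ S, f x ∂μ = ∫ x in R, f x ∂μ :=
      integral_inter_add_diff hS hf.integrableOn
    have h2 : (∫ x in S ∩ R, f x ∂μ) + ∫ x in S \ R, f x ∂μ = ∫ x in S, f x ∂μ :=
      integral_inter_add_diff hRm hf.integrableOn
    rw [Set.inter_comm] at h2
    linarith
  rw [← hR, hsplit p1 hp1i, hsplit p0 hp0i, mul_sub]
  have hA : c₀ * ∫ x in R \ S, p0 x ∂μ ≤ ∫ x in R \ S, p1 x ∂μ := by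
    rw [← integral_const_mul]
    apply setIntegral_mono_on ((hp0i.const_mul c₀).integrableOn)
      (h1R.mono_set Set.diff_subset) (hRm.diff hS)
    intro x hx; exact hx.1
  have hB : ∫ x in S \ R, p1 x ∂μ ≤ c₀ * ∫ x in S \ R, p0 x ∂μ := by
    rw [← integral_const_mul]
    apply setIntegral_mono_on (h1S.mono_set Set.diff_subset)
      ((hp0i.const_mul c₀).integrableOn) (hS.diff hRm)
    intro x hx; exact le_of_not_ge hx.2
  linarith
end

section
/- Let G be a finite set of strata. For each g let μ_g^0 and μ_g^1 be probability measures on ℝ (distribution of the score f̂(X) given Y=0, G=g and Y=1, G=g respectively), with μ_g^1 absolutely continuous w.r.t. μ_g^0 with density h_g (the likelihood ratio). Let w_g^0, w_g^1 ≥ 0 be stratum weights with Σ w_g^0 = Σ w_g^1 = 1, and let o_g = w_g^1 / w_g^0 (assume w_g^0 > 0). Fix c₀ > 0 and define, for each g, the region S_g = {s ∈ ℝ : o_g · h_g(s) ≥ c₀}; suppose Σ_g w_g^0 μ_g^0(S_g) = α₀. Then for any family of measurable sets (T_g) with Σ_g w_g^0 μ_g^0(T_g) ≤ α₀, we have Σ_g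 w_g^1 μ_g^1(T_g) ≤ Σ_g w_g^1 μ_g^1(S_g). -/
open MeasureTheory

/-- Lemma 2 / Theorem 2 optimality in the discrete-strata setting: thresholding
the calibrated ranking `r = o_g · h_g` at a common level `c₀` maximizes the
overall TPR subject to the overall FPR constraint. -/
theorem stmt_8 {G : Type*} [Fintype G]
    (μ0 μ1 : G → Measure ℝ)
    (hprob0 : ∀ g, IsProbabilityMeasure (μ0 g))
    (hprob1 : ∀ g, IsProbabilityMeasure (μ1 g))
    (h : G → ℝ → ℝ) (hhm : ∀ g, Measurable (h g)) (hh0 : ∀ g s, 0 ≤ h g s)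
    (hdens : ∀ g, μ1 g = (μ0 g).withDensity (fun s => ENNReal.ofReal (h g s)))
    (w0 w1 : G → ℝ) (hw0 : ∀ g, 0 < w0 g) (hw1 : ∀ g, 0 ≤ w1 g)
    (hw0sum : ∑ g, w0 g = 1) (hw1sum : ∑ g, w1 g = 1)
    (o : G → ℝ) (ho : ∀ g, o g = w1 g / w0 g)
    (c₀ : ℝ) (hc₀ : 0 < c₀) (α₀ : ℝ)
    (hS : ∑ g, w0 g * ((μ0 g) {s | c₀ ≤ o g * h g s}).toReal = α₀)
    (T : G → Set ℝ) (hTm : ∀ g, MeasurableSet (T g))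
    (hT : ∑ g, w0 g * ((μ0 g) (T g)).toReal ≤ α₀) :
    ∑ g, w1 g * ((μ1 g) (T g)).toReal ≤
      ∑ g, w1 g * ((μ1 g) {s | c₀ ≤ o g * h g s}).toReal := by
  classical
  set S : G → Set ℝ := fun g => {s | c₀ ≤ o g * h g s} with hSdef
  have hSm : ∀ g, MeasurableSet (S g) := fun g =>
    measurableSet_le measurable_const ((hhm g).const_mul _)
  -- w1 = w0 * o
  have hw1o : ∀ g, w1 g = w0 g * o g := fun g => by
    rw [ho g, mul_div_cancel₀ _ (hw0 g).ne']
  -- h g is integrable wrt μ0 g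
  have hlint : ∀ g, ∫⁻ s, ENNReal.ofReal (h g s) ∂(μ0 g) = 1 := by
    intro g
    have := (hprob1 g).measure_univ
    rw [hdens g, withDensity_apply _ MeasurableSet.univ, setLIntegral_univ] at this
    exact this
  have hInt : ∀ g, Integrable (h g) (μ0 g) := by
    intro g
    refine ⟨(hhm g).aestronglyMeasurable, ?_⟩
    rw [hasFiniteIntegral_iff_norm]
    have : ∀ s : ℝ, ENNReal.ofReal ‖h g s‖ = ENNReal.ofReal (h g s) := fun s => by
      rw [Real.norm_eq_abs, abs_of_nonneg (hh0 g s)]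
    simp only [this, hlint g]
    exact ENNReal.one_lt_top
  -- measure of μ1 as integral
  have key : ∀ g, ∀ A : Set ℝ, MeasurableSet A →
      ((μ1 g) A).toReal = ∫ s in A, h g s ∂(μ0 g) := by
    intro g A hA
    rw [hdens g, withDensity_apply _ hA,
      MeasureTheory.integral_eq_lintegral_of_nonneg_ae
        (Filter.Eventually.of_forall fun s => hh0 g s)
        ((hhm g).aestronglyMeasurable.restrict)]
  -- the function ψ
  set ψ : G → ℝ → ℝ := fun g s => w1 g * h g s - c₀ * w0 g with hψdef
  have hIψ : ∀ g, Integrable (ψ g) (μ0 g) := fun g =>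
    ((hInt g).const_mul _).sub (integrable_const _)
  have hψS : ∀ g, ∀ s ∈ S g, 0 ≤ ψ g s := by
    intro g s hs
    have : c₀ * w0 g ≤ w1 g * h g s := by
      rw [hw1o g, mul_assoc]
      calc c₀ * w0 g = w0 g * c₀ := mul_comm _ _
        _ ≤ w0 g * (o g * h g s) := by
            exact mul_le_mul_of_nonneg_left hs (hw0 g).le
    simpa [hψdef] using sub_nonneg.mpr this
  have hψSc : ∀ g, ∀ s, s ∉ S g → ψ g s ≤ 0 := by
    intro g s hs
    have hlt : o g * h g s < c₀ := lt_of_not_ge hs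
    have : w1 g * h g s ≤ c₀ * w0 g := by
      rw [hw1o g, mul_assoc]
      calc w0 g * (o g * h g s) ≤ w0 g * c₀ :=
            mul_le_mul_of_nonneg_left hlt.le (hw0 g).le
        _ = c₀ * w0 g := mul_comm _ _
    simpa [hψdef] using sub_nonpos.mpr this
  -- per-g: ∫_T ψ ≤ ∫_S ψ
  have hmain : ∀ g, ∫ s in T g, ψ g s ∂(μ0 g) ≤ ∫ s in S g, ψ g s ∂(μ0 g) := by
    intro g
    have h1 : ∫ s in T g ∩ S g, ψ g s ∂(μ0 g) + ∫ s in T g \ S g, ψ g s ∂(μ0 g)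
        = ∫ s in T g, ψ g s ∂(μ0 g) :=
      integral_inter_add_diff (hSm g) (hIψ g).integrableOn
    have h2 : ∫ s in S g ∩ T g, ψ g s ∂(μ0 g) + ∫ s in S g \ T g, ψ g s ∂(μ0 g)
        = ∫ s in S g, ψ g s ∂(μ0 g) :=
      integral_inter_add_diff (hTm g) (hIψ g).integrableOn
    have h3 : ∫ s in T g \ S g, ψ g s ∂(μ0 g) ≤ 0 :=
      setIntegral_nonpos ((hTm g).diff (hSm g)) (fun s hs => hψSc g s hs.2)
    have h4 : 0 ≤ ∫ s in S g \ T g, ψ g s ∂(μ0 g) :=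
      setIntegral_nonneg ((hSm g).diff (hTm g)) (fun s hs => hψS g s hs.1)
    have hcomm : T g ∩ S g = S g ∩ T g := Set.inter_comm _ _
    rw [← h1, ← h2, hcomm]
    linarith
  -- express w1 * μ1 A in terms of ψ
  have expand : ∀ g, ∀ A : Set ℝ, MeasurableSet A →
      w1 g * ((μ1 g) A).toReal
        = ∫ s in A, ψ g s ∂(μ0 g) + c₀ * (w0 g * ((μ0 g) A).toReal) := by
    intro g A hA
    have hsub : ∫ s in A, ψ g s ∂(μ0 g)
        = ∫ s in A, w1 g * h g s ∂(μ0 g) - ∫ s in A, (c₀ * w0 g) ∂(μ0 g) :=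
      integral_sub ((hInt g).const_mul _).integrableOn (integrable_const _).integrableOn
    rw [hsub, integral_const, integral_const_mul, ← key g A hA]
    simp [smul_eq_mul, measureReal_def]
    ring
  have eqT : ∑ g, w1 g * ((μ1 g) (T g)).toReal
      = (∑ g, ∫ s in T g, ψ g s ∂(μ0 g)) + c₀ * ∑ g, w0 g * ((μ0 g) (T g)).toReal := by
    rw [Finset.mul_sum, ← Finset.sum_add_distrib]
    exact Finset.sum_congr rfl fun g _ => expand g (T g) (hTm g)
  have eqS : ∑ g, w1 g * ((μ1 g) (S g)).toReal
      = (∑ g, ∫ s in S g, ψ g s ∂(μ0 g)) + c₀ * ∑ g, w0 g * ((μ0 g) (S g)).toReal := by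
    rw [Finset.mul_sum, ← Finset.sum_add_distrib]
    exact Finset.sum_congr rfl fun g _ => expand g (S g) (hSm g)
  have hsumψ : ∑ g, ∫ s in T g, ψ g s ∂(μ0 g) ≤ ∑ g, ∫ s in S g, ψ g s ∂(μ0 g) :=
    Finset.sum_le_sum fun g _ => hmain g
  have hc : c₀ * ∑ g, w0 g * ((μ0 g) (T g)).toReal
      ≤ c₀ * ∑ g, w0 g * ((μ0 g) (S g)).toReal := by
    rw [hS]
    exact mul_le_mul_of_nonneg_left hT hc₀.le
  calc ∑ g, w1 g * ((μ1 g) (T g)).toReal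
      = (∑ g, ∫ s in T g, ψ g s ∂(μ0 g)) + c₀ * ∑ g, w0 g * ((μ0 g) (T g)).toReal := eqT
    _ ≤ (∑ g, ∫ s in S g, ψ g s ∂(μ0 g)) + c₀ * ∑ g, w0 g * ((μ0 g) (S g)).toReal :=
        add_le_add hsumψ hc
    _ = ∑ g, w1 g * ((μ1 g) (S g)).toReal := eqS.symm
end

section
/- Let μ be a probability measure, p1, p0 : X → ℝ nonnegative integrable functions, and for a measurable ranking function r : X → ℝ define the achieved TPR at FPR budget α as T_r(α) = sup { ∫_S p1 dμ : S = {x : r(x) ≥ c} for some c, ∫_S p0 dμ ≤ α }. If r(x) = p1(x)/p0(x) μ-a.e. on {p0 > 0} (and r = ∞ convention on {p0 = 0, p1 > 0}), then for every measurable set S and every α with ∫_S p0 dμ ≤ α and such that some superlevel set R(c) of r has ∫_{R(c)} p0 dμ = α, we have ∫_S p1 dμ ≤ T_r(α). Moreover T_r is monotone nondecreasing in α. -/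
open MeasureTheory
open scoped ENNReal

/-- ROC functional formulation of Theorem 1: with the odds-ratio ranking
`r = p1/p0` (valued in `ℝ≥0∞`, so that `r = ∞` on `{p0 = 0, p1 > 0}`), the
achievable TPR `T_r(α)` by thresholding `r` dominates every measurable decision
region at every achievable FPR level, and `T_r` is monotone nondecreasing. -/
theorem stmt_11 {X : Type*} [MeasurableSpace X] (μ : Measure X) [IsProbabilityMeasure μ]
    (p1 p0 : X → ℝ) (hp1m : Measurable p1) (hp0m : Measurable p0)
    (hp1 : ∀ x, 0 ≤ p1 x) (hp0 : ∀ x, 0 ≤ p0 x)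
    (hp1i : Integrable p1 μ) (hp0i : Integrable p0 μ)
    (r : X → ℝ≥0∞) (hrm : Measurable r)
    (hr : ∀ᵐ x ∂μ, r x = ENNReal.ofReal (p1 x) / ENNReal.ofReal (p0 x))
    (T : ℝ → ℝ)
    (hT : ∀ α : ℝ, T α = sSup {t : ℝ | ∃ c : ℝ≥0∞,
      (∫ x in {x | c ≤ r x}, p0 x ∂μ) ≤ α ∧ t = ∫ x in {x | c ≤ r x}, p1 x ∂μ}) :
    (∀ (α : ℝ) (S : Set X), MeasurableSet S → (∫ x in S, p0 x ∂μ) ≤ α →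
      (∃ c : ℝ≥0∞, ∫ x in {x | c ≤ r x}, p0 x ∂μ = α) →
      ∫ x in S, p1 x ∂μ ≤ T α) ∧
    Monotone T := by
  have hRmeas : ∀ c : ℝ≥0∞, MeasurableSet {x | c ≤ r x} := fun c =>
    hrm measurableSet_Ici
  -- boundedness of the candidate sets
  have hbdd : ∀ α : ℝ, BddAbove {t : ℝ | ∃ c : ℝ≥0∞,
      (∫ x in {x | c ≤ r x}, p0 x ∂μ) ≤ α ∧ t = ∫ x in {x | c ≤ r x}, p1 x ∂μ} := by
    intro α
    refine ⟨∫ x, p1 x ∂μ, ?_⟩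
    rintro t ⟨c, -, rfl⟩
    exact setIntegral_le_integral hp1i (Filter.Eventually.of_forall hp1)
  -- nonnegativity of candidate values
  have hnonneg : ∀ (α : ℝ) t, t ∈ {t : ℝ | ∃ c : ℝ≥0∞,
      (∫ x in {x | c ≤ r x}, p0 x ∂μ) ≤ α ∧ t = ∫ x in {x | c ≤ r x}, p1 x ∂μ} → 0 ≤ t := by
    rintro α t ⟨c, -, rfl⟩
    exact setIntegral_nonneg (hRmeas c) fun x _ => hp1 x
  -- the Neyman–Pearson key lemma
  have key : ∀ (c : ℝ≥0∞) (S : Set X), MeasurableSet S →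
      (∫ x in S, p0 x ∂μ) ≤ (∫ x in {x | c ≤ r x}, p0 x ∂μ) →
      (∫ x in S, p1 x ∂μ) ≤ ∫ x in {x | c ≤ r x}, p1 x ∂μ := by
    intro c S hS h0
    set R : Set X := {x | c ≤ r x} with hRdef
    have hR : MeasurableSet R := hRmeas c
    have split1 : ∀ (f : X → ℝ), Integrable f μ →
        (∫ x in S, f x ∂μ) = (∫ x in S ∩ R, f x ∂μ) + ∫ x in S \ R, f x ∂μ := fun f hf =>
      (integral_inter_add_diff hR hf.integrableOn).symm
    have split2 : ∀ (f : X → ℝ), Integrable f μ →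
        (∫ x in R, f x ∂μ) = (∫ x in S ∩ R, f x ∂μ) + ∫ x in R \ S, f x ∂μ := by
      intro f hf
      rw [← integral_inter_add_diff hS hf.integrableOn, Set.inter_comm]
    have hd0 : (∫ x in S \ R, p0 x ∂μ) ≤ ∫ x in R \ S, p0 x ∂μ := by
      have h := h0
      rw [split1 p0 hp0i, split2 p0 hp0i] at h
      linarith
    suffices hd1 : (∫ x in S \ R, p1 x ∂μ) ≤ ∫ x in R \ S, p1 x ∂μ by
      rw [split1 p1 hp1i, split2 p1 hp1i]
      linarith
    by_cases hc : c = ∞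
    · -- on R, p0 = 0 a.e., hence ∫_S p0 = 0, hence p1 = 0 a.e. on S \ R
      have h0R : ∀ᵐ x ∂μ, x ∈ R → p0 x = 0 := by
        filter_upwards [hr] with x hx hmem
        have hxr : r x = ∞ := top_le_iff.mp (hc ▸ hmem)
        rw [hx] at hxr
        rcases ENNReal.div_eq_top.mp hxr with ⟨-, hb⟩ | ⟨ha, -⟩
        · have := ENNReal.ofReal_eq_zero.mp hb
          linarith [hp0 x]
        · exact absurd ha ENNReal.ofReal_ne_top
      have hR0 : (∫ x in R, p0 x ∂μ) = 0 := by
        rw [setIntegral_congr_ae hR h0R]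
        simp
      have hS0 : (∫ x in S, p0 x ∂μ) = 0 :=
        le_antisymm (h0.trans hR0.le) (setIntegral_nonneg hS fun x _ => hp0 x)
      have hS0' : ∀ᵐ x ∂μ, x ∈ S → p0 x = 0 := by
        have := (integral_eq_zero_iff_of_nonneg_ae
          (ae_restrict_of_ae (Filter.Eventually.of_forall hp0)) hp0i.integrableOn).mp hS0
        exact (ae_restrict_iff' hS).mp this
      have hP1 : ∀ᵐ x ∂μ, x ∈ S \ R → p1 x = 0 := by
        filter_upwards [hr, hS0'] with x hx hx0 hmem
        have hp0x : p0 x = 0 := hx0 hmem.1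
        have hxr : r x ≠ ∞ := by
          intro h
          exact hmem.2 (by rw [hRdef]; exact Set.mem_setOf.mpr (hc ▸ h.ge))
        rw [hx, hp0x] at hxr
        by_contra hne
        have hp1pos : 0 < p1 x := lt_of_le_of_ne (hp1 x) (Ne.symm hne)
        exact hxr (ENNReal.div_eq_top.mpr (Or.inl
          ⟨(ENNReal.ofReal_pos.mpr hp1pos).ne', by simp⟩))
      have : (∫ x in S \ R, p1 x ∂μ) = 0 := by
        rw [setIntegral_congr_ae (hS.diff hR) hP1]; simp
      rw [this]
      exact setIntegral_nonneg (hR.diff hS) fun x _ => hp1 x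
    · -- finite threshold γ
      set γ : ℝ := c.toReal with hγdef
      have hγ0 : 0 ≤ γ := ENNReal.toReal_nonneg
      have hae1 : ∀ᵐ x ∂μ.restrict (S \ R), p1 x ≤ γ * p0 x := by
        rw [ae_restrict_iff' (hS.diff hR)]
        filter_upwards [hr] with x hx hmem
        have hlt : r x < c := lt_of_not_ge hmem.2
        rw [hx] at hlt
        by_cases hp : p0 x = 0
        · rw [hp] at hlt
          simp only [ENNReal.ofReal_zero] at hlt
          have h1 : ENNReal.ofReal (p1 x) = 0 := by
            by_contra hne
            rw [ENNReal.div_zero hne] at hlt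
            exact absurd hlt (not_lt.mpr le_top)
          have := ENNReal.ofReal_eq_zero.mp h1
          rw [hp]; nlinarith
        · have hp' : 0 < p0 x := lt_of_le_of_ne (hp0 x) (Ne.symm hp)
          have hb0 : ENNReal.ofReal (p0 x) ≠ 0 := (ENNReal.ofReal_pos.mpr hp').ne'
          rw [ENNReal.div_lt_iff (Or.inl hb0) (Or.inl ENNReal.ofReal_ne_top)] at hlt
          have := (ENNReal.toReal_le_toReal ENNReal.ofReal_ne_top
            (ENNReal.mul_ne_top hc ENNReal.ofReal_ne_top)).mpr (le_of_lt hlt)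
          rwa [ENNReal.toReal_ofReal (hp1 x), ENNReal.toReal_mul,
            ENNReal.toReal_ofReal (hp0 x)] at this
      have hae2 : ∀ᵐ x ∂μ.restrict (R \ S), γ * p0 x ≤ p1 x := by
        rw [ae_restrict_iff' (hR.diff hS)]
        filter_upwards [hr] with x hx hmem
        have hle : c ≤ r x := hmem.1
        rw [hx] at hle
        by_cases hp : p0 x = 0
        · rw [hp, mul_zero]; exact hp1 x
        · have hp' : 0 < p0 x := lt_of_le_of_ne (hp0 x) (Ne.symm hp)
          have hb0 : ENNReal.ofReal (p0 x) ≠ 0 := (ENNReal.ofReal_pos.mpr hp').ne'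
          rw [ENNReal.le_div_iff_mul_le (Or.inl hb0) (Or.inl ENNReal.ofReal_ne_top)] at hle
          have := (ENNReal.toReal_le_toReal
            (ENNReal.mul_ne_top hc ENNReal.ofReal_ne_top) ENNReal.ofReal_ne_top).mpr hle
          rwa [ENNReal.toReal_ofReal (hp1 x), ENNReal.toReal_mul,
            ENNReal.toReal_ofReal (hp0 x)] at this
      calc (∫ x in S \ R, p1 x ∂μ)
          ≤ ∫ x in S \ R, γ * p0 x ∂μ :=
            setIntegral_mono_ae_restrict hp1i.integrableOn
              (hp0i.const_mul γ).integrableOn hae1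
        _ = γ * ∫ x in S \ R, p0 x ∂μ := by rw [integral_const_mul]
        _ ≤ γ * ∫ x in R \ S, p0 x ∂μ := mul_le_mul_of_nonneg_left hd0 hγ0
        _ = ∫ x in R \ S, γ * p0 x ∂μ := by rw [integral_const_mul]
        _ ≤ ∫ x in R \ S, p1 x ∂μ :=
            setIntegral_mono_ae_restrict (hp0i.const_mul γ).integrableOn
              hp1i.integrableOn hae2
  constructor
  · rintro α S hS hSα ⟨c, hc⟩
    have h1 : (∫ x in S, p1 x ∂μ) ≤ ∫ x in {x | c ≤ r x}, p1 x ∂μ :=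
      key c S hS (hSα.trans hc.symm.le)
    have h2 : (∫ x in {x | c ≤ r x}, p1 x ∂μ) ≤ T α := by
      rw [hT α]
      exact le_csSup (hbdd α) ⟨c, hc.le, rfl⟩
    exact h1.trans h2
  · intro a b hab
    rw [hT a, hT b]
    rcases Set.eq_empty_or_nonempty {t : ℝ | ∃ c : ℝ≥0∞,
        (∫ x in {x | c ≤ r x}, p0 x ∂μ) ≤ a ∧ t = ∫ x in {x | c ≤ r x}, p1 x ∂μ} with h | h
    · rw [h, Real.sSup_empty]
      exact Real.sSup_nonneg (hnonneg b)
    · refine csSup_le_csSup (hbdd b) h ?_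
      rintro t ⟨c, h1, h2⟩
      exact ⟨c, h1.trans hab, h2⟩
end
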